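/- Let b ≥ 1 be an integer, let p = (p_0, …, p_{2b}) be a probability vector with all entries positive, and let X_1, …, X_n be i.i.d. random variables with P(X_j = k) = p_k for 0 ≤ k ≤ 2b. Let N_k = #{ j : 1 ≤ j ≤ n, X_j = k } denote the count of samples equal to k. Then for every index i with 0 ≤ i ≤ 2b−1 such that p_i < p_{i+1}, one has P(N_i ≥ N_{i+1}) ≤ (1 − (√p_{i+1} − √p_i)²)^n. -/

import Mathlib

open Finset Real MeasureTheory ProbabilityTheory

lemma lintegral_prod_indep {Ω : Type*} [MeasurableSpace Ω] {μ : Measure Ω}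
    [IsProbabilityMeasure μ] {ι : Type*} (f : ι → Ω → ENNReal)
    (hmeas : ∀ j, Measurable (f j))
    (hindep : iIndepFun f μ) (s : Finset ι) :
    ∫⁻ ω, ∏ j ∈ s, f j ω ∂μ = ∏ j ∈ s, ∫⁻ ω, f j ω ∂μ := by
  classical
  induction s using Finset.induction with
  | empty => simp
  | insert a s ha ih =>
    have hind : IndepFun (f a) (fun ω => ∏ j ∈ s, f j ω) μ := by
      have := (hindep.indepFun_finsetProd_of_notMem hmeas ha).symm
      simpa [Finset.prod_fn] using this
    have hmul := lintegral_mul_eq_lintegral_mul_lintegral_of_indepFun''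
      (hmeas a).aemeasurable (Finset.measurable_prod s fun j _ => hmeas j).aemeasurable hind
    calc ∫⁻ ω, ∏ j ∈ insert a s, f j ω ∂μ
        = ∫⁻ ω, f a ω * ∏ j ∈ s, f j ω ∂μ := by simp [Finset.prod_insert ha]
      _ = (∫⁻ ω, f a ω ∂μ) * ∫⁻ ω, ∏ j ∈ s, f j ω ∂μ := hmul
      _ = ∏ j ∈ insert a s, ∫⁻ ω, f j ω ∂μ := by rw [ih, Finset.prod_insert ha]

lemma single_lintegral {Ω : Type*} [MeasurableSpace Ω] (μ : Measure Ω)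
    [IsProbabilityMeasure μ] (Y : Ω → ℕ) (hY : Measurable Y) (i : ℕ) (a c : ENNReal) :
    ∫⁻ ω, (if Y ω = i then a else if Y ω = i + 1 then c else 1) ∂μ
      = a * μ {ω | Y ω = i} + c * μ {ω | Y ω = i + 1}
        + (1 - μ {ω | Y ω = i} - μ {ω | Y ω = i + 1}) := by
  classical
  set A : Set Ω := {ω | Y ω = i} with hA
  set B : Set Ω := {ω | Y ω = i + 1} with hB
  have hAm : MeasurableSet A := hY (measurableSet_singleton i)
  have hBm : MeasurableSet B := hY (measurableSet_singleton (i + 1))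
  have hdisj : Disjoint A B := by
    apply Set.disjoint_left.2
    intro ω hω hω'
    simp only [hA, hB, Set.mem_setOf_eq] at hω hω'
    omega
  have hpt : (fun ω => if Y ω = i then a else if Y ω = i + 1 then c else 1)
      = fun ω => A.indicator (fun _ => a) ω + B.indicator (fun _ => c) ω
          + (A ∪ B)ᶜ.indicator (fun _ => 1) ω := by
    funext ω
    by_cases h1 : Y ω = i
    · simp [Set.indicator_apply, hA, hB, h1]
    · by_cases h2 : Y ω = i + 1 <;>
        simp [Set.indicator_apply, hA, hB, h1, h2]
  rw [hpt]
  rw [lintegral_add_right _ ((measurable_const.indicator ((hAm.union hBm).compl)))]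
  rw [lintegral_add_right _ (measurable_const.indicator hBm)]
  rw [lintegral_indicator hAm, lintegral_indicator hBm,
    lintegral_indicator ((hAm.union hBm).compl)]
  simp only [setLIntegral_const]
  have hcompl : μ (A ∪ B)ᶜ = 1 - μ A - μ B := by
    rw [measure_compl (hAm.union hBm) (measure_ne_top μ _),
      measure_union hdisj hBm, measure_univ, tsub_add_eq_tsub_tsub]
  rw [hcompl]
  ring

theorem type_ordering_error_bound (b n : ℕ) (hb : 1 ≤ b) (p : ℕ → ℝ)
    (hp_nonneg : ∀ k ≤ 2 * b, 0 ≤ p k)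
    (hp_sum : ∑ k ∈ Finset.range (2 * b + 1), p k = 1)
    {Ω : Type*} [MeasurableSpace Ω] (μ : Measure Ω) [IsProbabilityMeasure μ]
    (X : Fin n → Ω → ℕ) (hXmeas : ∀ j, Measurable (X j))
    (hXindep : iIndepFun X μ)
    (hXdist : ∀ j, ∀ k ≤ 2 * b, μ {ω | X j ω = k} = ENNReal.ofReal (p k))
    (N : ℕ → Ω → ℕ)
    (hN : ∀ k ω, N k ω = (Finset.univ.filter fun j : Fin n => X j ω = k).card)
    (i : ℕ) (hi : i + 1 ≤ 2 * b) (hlt : p i < p (i + 1)) :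
    (μ {ω | N (i + 1) ω ≤ N i ω}).toReal ≤
      (1 - (Real.sqrt (p (i + 1)) - Real.sqrt (p i)) ^ 2) ^ n := by
  classical
  have hile : i ≤ 2 * b := by omega
  have hP0 : 0 ≤ p i := hp_nonneg i hile
  have hQpos : 0 < p (i + 1) := lt_of_le_of_lt hP0 hlt
  have hPQ : p i + p (i + 1) ≤ 1 := by
    have hsub : ({i, i + 1} : Finset ℕ) ⊆ Finset.range (2 * b + 1) := by
      intro k hk
      simp only [Finset.mem_insert, Finset.mem_singleton] at hk
      rw [Finset.mem_range]; omega
    have := Finset.sum_le_sum_of_subset_of_nonneg hsub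
      (fun k hk _ => hp_nonneg k (by rw [Finset.mem_range] at hk; omega))
    rw [Finset.sum_pair (by omega : i ≠ i + 1), hp_sum] at this
    exact this
  -- the generic Chernoff-type bound using multiplier values a, c
  have key : ∀ a c : ENNReal,
      ({ω | N (i + 1) ω ≤ N i ω} : Set Ω) ≤ᵐ[μ] {ω | 1 ≤ a ^ N i ω * c ^ N (i + 1) ω} →
      μ {ω | N (i + 1) ω ≤ N i ω} ≤
        (a * ENNReal.ofReal (p i) + c * ENNReal.ofReal (p (i + 1))
          + (1 - ENNReal.ofReal (p i) - ENNReal.ofReal (p (i + 1)))) ^ n := by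
    intro a c hincl
    set φ : ℕ → ENNReal := fun k => if k = i then a else if k = i + 1 then c else 1 with hφ
    set f : Fin n → Ω → ENNReal := fun j ω => φ (X j ω) with hf
    have hfmeas : ∀ j, Measurable (f j) := fun j => show Measurable (φ ∘ X j) from measurable_from_top.comp (hXmeas j)
    have hfindep : iIndepFun f μ :=
      hXindep.comp (fun _ => φ) (fun _ => measurable_from_top)
    have hGeq : ∀ ω, (∏ j, f j ω) = a ^ N i ω * c ^ N (i + 1) ω := by
      intro ω
      have hpt : ∀ j : Fin n, f j ω =
          (if X j ω = i then a else 1) * (if X j ω = i + 1 then c else 1) := by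
        intro j
        simp only [hf, hφ]
        by_cases h1 : X j ω = i
        · simp [h1, (by omega : i ≠ i + 1)]
        · by_cases h2 : X j ω = i + 1 <;> simp [h1, h2]
      rw [Finset.prod_congr rfl (fun j _ => hpt j), Finset.prod_mul_distrib,
        Finset.prod_ite, Finset.prod_ite, Finset.prod_const, Finset.prod_const,
        Finset.prod_const, Finset.prod_const, one_pow, one_pow, mul_one, mul_one,
        hN i ω, hN (i + 1) ω]
    have hGmeas : Measurable (fun ω => ∏ j, f j ω) :=
      Finset.measurable_prod Finset.univ fun j _ => hfmeas j
    have step1 : μ {ω | N (i + 1) ω ≤ N i ω} ≤ μ {ω | 1 ≤ ∏ j, f j ω} := by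
      apply measure_mono_ae
      have : ({ω | 1 ≤ a ^ N i ω * c ^ N (i + 1) ω} : Set Ω)
          = {ω | 1 ≤ ∏ j, f j ω} := by
        ext ω; simp [hGeq ω]
      rw [← this]; exact hincl
    have step2 : μ {ω | 1 ≤ ∏ j, f j ω} ≤ ∫⁻ ω, ∏ j, f j ω ∂μ := by
      simpa using mul_meas_ge_le_lintegral₀ hGmeas.aemeasurable 1
    have step3 : ∫⁻ ω, ∏ j, f j ω ∂μ =
        (a * ENNReal.ofReal (p i) + c * ENNReal.ofReal (p (i + 1))
          + (1 - ENNReal.ofReal (p i) - ENNReal.ofReal (p (i + 1)))) ^ n := by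
      rw [lintegral_prod_indep f hfmeas hfindep]
      have hone : ∀ j : Fin n, ∫⁻ ω, f j ω ∂μ =
          a * ENNReal.ofReal (p i) + c * ENNReal.ofReal (p (i + 1))
            + (1 - ENNReal.ofReal (p i) - ENNReal.ofReal (p (i + 1))) := by
        intro j
        have := single_lintegral μ (X j) (hXmeas j) i a c
        rw [hXdist j i hile, hXdist j (i + 1) hi] at this
        exact this
      rw [Finset.prod_congr rfl (fun j _ => hone j), Finset.prod_const,
        Finset.card_univ, Fintype.card_fin]
    exact (step1.trans step2).trans_eq step3
  rcases eq_or_lt_of_le hP0 with hP | hP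
  · -- p i = 0
    have hQ1 : p (i + 1) ≤ 1 := by nlinarith
    have hnull : μ (⋃ j, {ω | X j ω = i}) = 0 :=
      measure_iUnion_null fun j => by rw [hXdist j i hile, ← hP]; simp
    have hincl : ({ω | N (i + 1) ω ≤ N i ω} : Set Ω) ≤ᵐ[μ]
        {ω | 1 ≤ (1 : ENNReal) ^ N i ω * (0 : ENNReal) ^ N (i + 1) ω} := by
      rw [ae_le_set]
      apply measure_mono_null _ hnull
      intro ω hω
      simp only [Set.mem_diff, Set.mem_setOf_eq, one_pow, one_mul, not_le] at hω
      obtain ⟨hle, hlt1⟩ := hω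
      have hN1 : 0 < N (i + 1) ω := by
        by_contra h
        push_neg at h
        interval_cases h' : N (i + 1) ω
        · simp at hlt1
        all_goals omega
      have hNi : 0 < N i ω := lt_of_lt_of_le hN1 hle
      rw [hN i ω, Finset.card_pos] at hNi
      obtain ⟨j, hj⟩ := hNi
      rw [Finset.mem_filter] at hj
      exact Set.mem_iUnion.2 ⟨j, hj.2⟩
    have hbd := key 1 0 hincl
    have hval : (1 * ENNReal.ofReal (p i) + 0 * ENNReal.ofReal (p (i + 1))
        + (1 - ENNReal.ofReal (p i) - ENNReal.ofReal (p (i + 1))))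
        = ENNReal.ofReal (1 - p (i + 1)) := by
      rw [← hP]
      simp [ENNReal.ofReal_sub _ hQpos.le]
    rw [hval] at hbd
    have hfin : (ENNReal.ofReal (1 - p (i + 1))) ^ n ≠ ⊤ := by
      exact ENNReal.pow_ne_top ENNReal.ofReal_ne_top
    have := ENNReal.toReal_mono hfin hbd
    rw [ENNReal.toReal_pow, ENNReal.toReal_ofReal (by linarith)] at this
    calc (μ {ω | N (i + 1) ω ≤ N i ω}).toReal ≤ (1 - p (i + 1)) ^ n := this
      _ = (1 - (Real.sqrt (p (i + 1)) - Real.sqrt (p i)) ^ 2) ^ n := by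
          rw [← hP, Real.sqrt_zero, sub_zero, Real.sq_sqrt hQpos.le]
  · -- 0 < p i
    set t : ℝ := Real.sqrt (p (i + 1) / p i) with htdef
    have ht1 : 1 ≤ t := Real.one_le_sqrt.2 ((one_le_div hP).2 hlt.le)
    have ht0 : 0 < t := by linarith
    set a : ENNReal := ENNReal.ofReal t with hadef
    have ha1 : 1 ≤ a := ENNReal.one_le_ofReal.2 ht1
    have ha0 : a ≠ 0 := by
      simp only [hadef, ne_eq, ENNReal.ofReal_eq_zero, not_le]; exact ht0
    have hatop : a ≠ ⊤ := ENNReal.ofReal_ne_top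
    have hincl : ({ω | N (i + 1) ω ≤ N i ω} : Set Ω) ≤ᵐ[μ]
        {ω | 1 ≤ a ^ N i ω * a⁻¹ ^ N (i + 1) ω} := by
      rw [ae_le_set]
      have hsub : ({ω | N (i + 1) ω ≤ N i ω} : Set Ω) ⊆
          {ω | 1 ≤ a ^ N i ω * a⁻¹ ^ N (i + 1) ω} := by
        intro ω hω
        simp only [Set.mem_setOf_eq] at hω ⊢
        have hsplit : a ^ N i ω = a ^ (N i ω - N (i + 1) ω) * a ^ N (i + 1) ω := by
          rw [← pow_add, Nat.sub_add_cancel hω]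
        rw [hsplit, mul_assoc, ← mul_pow, ENNReal.mul_inv_cancel ha0 hatop, one_pow,
          mul_one]
        exact one_le_pow_of_one_le' ha1 _
      rw [Set.diff_eq_empty.2 hsub]
      exact measure_empty
    have hbd := key a a⁻¹ hincl
    -- compute the base value
    have hsP : Real.sqrt (p i) > 0 := Real.sqrt_pos.2 hP
    have hsQ : Real.sqrt (p (i + 1)) > 0 := Real.sqrt_pos.2 hQpos
    have hPP : Real.sqrt (p i) * Real.sqrt (p i) = p i := Real.mul_self_sqrt hP0
    have hQQ : Real.sqrt (p (i + 1)) * Real.sqrt (p (i + 1)) = p (i + 1) :=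
      Real.mul_self_sqrt hQpos.le
    have hts : t = Real.sqrt (p (i + 1)) / Real.sqrt (p i) := by
      rw [htdef, Real.sqrt_div hQpos.le]
    have htP : t * p i = Real.sqrt (p (i + 1)) * Real.sqrt (p i) := by
      rw [hts]; field_simp; nlinarith [hPP]
    have htQ : t⁻¹ * p (i + 1) = Real.sqrt (p (i + 1)) * Real.sqrt (p i) := by
      rw [hts]; field_simp; nlinarith [hQQ]
    have hreal : t * p i + t⁻¹ * p (i + 1) + (1 - p i - p (i + 1))
        = 1 - (Real.sqrt (p (i + 1)) - Real.sqrt (p i)) ^ 2 := by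
      rw [htP, htQ]; nlinarith [hPP, hQQ]
    have hr0 : 0 ≤ 1 - (Real.sqrt (p (i + 1)) - Real.sqrt (p i)) ^ 2 := by
      rw [← hreal]
      have h1 : 0 ≤ t * p i := mul_nonneg ht0.le hP0
      have h2 : 0 ≤ t⁻¹ * p (i + 1) := mul_nonneg (inv_nonneg.2 ht0.le) hQpos.le
      linarith
    have hvalue : a * ENNReal.ofReal (p i) + a⁻¹ * ENNReal.ofReal (p (i + 1))
        + (1 - ENNReal.ofReal (p i) - ENNReal.ofReal (p (i + 1)))
        = ENNReal.ofReal (1 - (Real.sqrt (p (i + 1)) - Real.sqrt (p i)) ^ 2) := by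
      have h1 : a * ENNReal.ofReal (p i) = ENNReal.ofReal (t * p i) :=
        (ENNReal.ofReal_mul ht0.le).symm
      have hainv : a⁻¹ = ENNReal.ofReal t⁻¹ := (ENNReal.ofReal_inv_of_pos ht0).symm
      have h2 : a⁻¹ * ENNReal.ofReal (p (i + 1)) = ENNReal.ofReal (t⁻¹ * p (i + 1)) := by
        rw [hainv, ← ENNReal.ofReal_mul (inv_nonneg.2 ht0.le)]
      have h3 : (1 : ENNReal) - ENNReal.ofReal (p i) - ENNReal.ofReal (p (i + 1))
          = ENNReal.ofReal (1 - p i - p (i + 1)) := by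
        rw [tsub_tsub, sub_sub, ENNReal.ofReal_sub _ (by linarith : (0:ℝ) ≤ p i + p (i + 1)),
          ENNReal.ofReal_add hP0 hQpos.le, ENNReal.ofReal_one]
      rw [h1, h2, h3, ← ENNReal.ofReal_add (mul_nonneg ht0.le hP0)
        (mul_nonneg (inv_nonneg.2 ht0.le) hQpos.le),
        ← ENNReal.ofReal_add (by positivity) (by linarith), hreal]
    rw [hvalue] at hbd
    have hfin : (ENNReal.ofReal (1 - (Real.sqrt (p (i + 1)) - Real.sqrt (p i)) ^ 2)) ^ n ≠ ⊤ :=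
      ENNReal.pow_ne_top ENNReal.ofReal_ne_top
    have hfinal := ENNReal.toReal_mono hfin hbd
    rwa [ENNReal.toReal_pow, ENNReal.toReal_ofReal hr0] at hfinal
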